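/- Suppose G > 1 and 0 < γ < 1. Then: (a) there exists a unique w_b^* > 0 satisfying c_y(1, G·w_b^*)/c_z(1, G·w_b^*) = G; (b) w_f^* < w_b^*, where w_f^* > 0 is the unique solution of c_y(1,G·w_f^*)/c_z(1,G·w_f^*) = G^γ; (c) for any w > 0, a number s ∈ (0,1) satisfies the bubbly steady state condition G·c_z(1−s, G·(w+s)) = c_y(1−s, G·(w+s)) if and only if s = (w_b^* − w)/(w_b^* + 1), and such an s ∈ (0,1) exists if and only if w < w_b^*. -/

import Mathlib

open Real Filter Set Topology

/-- Assumption C: `c` is a positive, homogeneous of degree 1, twice continuously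
differentiable function on `(0,∞)²` with partial derivatives `cy, cz > 0`, second partial
derivatives `cyy, czz < 0`, and Inada conditions. -/
structure AssumptionC (c cy cz cyy cyz czz : ℝ → ℝ → ℝ) : Prop where
  c_pos : ∀ ⦃y z : ℝ⦄, 0 < y → 0 < z → 0 < c y z
  homog : ∀ ⦃l y z : ℝ⦄, 0 < l → 0 < y → 0 < z → c (l * y) (l * z) = l * c y z
  hderiv_y : ∀ ⦃y z : ℝ⦄, 0 < y → 0 < z → HasDerivAt (fun u => c u z) (cy y z) y
  hderiv_z : ∀ ⦃y z : ℝ⦄, 0 < y → 0 < z → HasDerivAt (fun v => c y v) (cz y z) z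
  hderiv_yy : ∀ ⦃y z : ℝ⦄, 0 < y → 0 < z → HasDerivAt (fun u => cy u z) (cyy y z) y
  hderiv_yz : ∀ ⦃y z : ℝ⦄, 0 < y → 0 < z → HasDerivAt (fun v => cy y v) (cyz y z) z
  hderiv_zy : ∀ ⦃y z : ℝ⦄, 0 < y → 0 < z → HasDerivAt (fun u => cz u z) (cyz y z) y
  hderiv_zz : ∀ ⦃y z : ℝ⦄, 0 < y → 0 < z → HasDerivAt (fun v => cz y v) (czz y z) z
  cy_pos : ∀ ⦃y z : ℝ⦄, 0 < y → 0 < z → 0 < cy y z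
  cz_pos : ∀ ⦃y z : ℝ⦄, 0 < y → 0 < z → 0 < cz y z
  cyy_neg : ∀ ⦃y z : ℝ⦄, 0 < y → 0 < z → cyy y z < 0
  czz_neg : ∀ ⦃y z : ℝ⦄, 0 < y → 0 < z → czz y z < 0
  cont2 : ContinuousOn (fun p : ℝ × ℝ => (cyy p.1 p.2, cyz p.1 p.2, czz p.1 p.2))
    {p : ℝ × ℝ | 0 < p.1 ∧ 0 < p.2}
  inada_y : ∀ ⦃z : ℝ⦄, 0 < z → Tendsto (fun y => cy y z) (𝓝[>] (0:ℝ)) atTop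
  inada_z : ∀ ⦃y : ℝ⦄, 0 < y → Tendsto (fun z => cz y z) (𝓝[>] (0:ℝ)) atTop

section aux
variable {c cy cz cyy cyz czz : ℝ → ℝ → ℝ} (hC : AssumptionC c cy cz cyy cyz czz)
include hC

lemma cy_homog0 : ∀ ⦃l y z : ℝ⦄, 0 < l → 0 < y → 0 < z → cy (l * y) (l * z) = cy y z := by
  intro l y z hl hy hz
  have hly : 0 < l * y := by positivity
  have hlz : 0 < l * z := by positivity
  have hinner : HasDerivAt (fun u : ℝ => l * u) l y := by
    simpa using (hasDerivAt_id y).const_mul l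
  have h2 : HasDerivAt (fun u => c (l * u) (l * z)) (cy (l * y) (l * z) * l) y :=
    (hC.hderiv_y hly hlz).comp y hinner
  have heq : (fun u => l * c u z) =ᶠ[𝓝 y] (fun u => c (l * u) (l * z)) := by
    filter_upwards [Ioi_mem_nhds hy] with u hu
    exact (hC.homog hl hu hz).symm
  have h2' : HasDerivAt (fun u => l * c u z) (cy (l * y) (l * z) * l) y :=
    h2.congr_of_eventuallyEq heq
  have h3 : HasDerivAt (fun u => l * c u z) (l * cy y z) y := (hC.hderiv_y hy hz).const_mul l
  have h4 : cy (l * y) (l * z) * l = l * cy y z := h2'.unique h3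
  have hl' : l ≠ 0 := ne_of_gt hl
  field_simp at h4
  nlinarith [h4]

lemma cz_homog0 : ∀ ⦃l y z : ℝ⦄, 0 < l → 0 < y → 0 < z → cz (l * y) (l * z) = cz y z := by
  intro l y z hl hy hz
  have hly : 0 < l * y := by positivity
  have hlz : 0 < l * z := by positivity
  have hinner : HasDerivAt (fun v : ℝ => l * v) l z := by
    simpa using (hasDerivAt_id z).const_mul l
  have h2 : HasDerivAt (fun v => c (l * y) (l * v)) (cz (l * y) (l * z) * l) z :=
    (hC.hderiv_z hly hlz).comp z hinner
  have heq : (fun v => l * c y v) =ᶠ[𝓝 z] (fun v => c (l * y) (l * v)) := by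
    filter_upwards [Ioi_mem_nhds hz] with v hv
    exact (hC.homog hl hy hv).symm
  have h2' : HasDerivAt (fun v => l * c y v) (cz (l * y) (l * z) * l) z :=
    h2.congr_of_eventuallyEq heq
  have h3 : HasDerivAt (fun v => l * c y v) (l * cz y z) z := (hC.hderiv_z hy hz).const_mul l
  have h4 : cz (l * y) (l * z) * l = l * cz y z := h2'.unique h3
  nlinarith [h4]

lemma cyz_pos : ∀ ⦃y z : ℝ⦄, 0 < y → 0 < z → 0 < cyz y z := by
  intro y z hy hz
  -- A(t) = cy (t*y) z has derivative cyy y z * y at t = 1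
  have hinner : HasDerivAt (fun t : ℝ => t * y) y 1 := by
    simpa using (hasDerivAt_id (1:ℝ)).mul_const y
  have hA : HasDerivAt (fun t => cy (t * y) z) (cyy y z * y) 1 := by
    have h' : HasDerivAt (fun u => cy u z) (cyy y z) ((1:ℝ) * y) := by
      rw [one_mul]; exact hC.hderiv_yy hy hz
    exact h'.comp (1:ℝ) hinner
  -- B(t) = cy y (z * t⁻¹) has derivative cyz y z * (-z) at t = 1
  have hinner2 : HasDerivAt (fun t : ℝ => z * t⁻¹) (-z) 1 := by
    have := (hasDerivAt_inv (one_ne_zero)).const_mul z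
    simpa using this
  have hB : HasDerivAt (fun t => cy y (z * t⁻¹)) (cyz y z * (-z)) 1 := by
    have h' : HasDerivAt (fun v => cy y v) (cyz y z) (z * (1:ℝ)⁻¹) := by
      rw [inv_one, mul_one]; exact hC.hderiv_yz hy hz
    exact h'.comp (1:ℝ) hinner2
  have heq : (fun t => cy y (z * t⁻¹)) =ᶠ[𝓝 (1:ℝ)] (fun t => cy (t * y) z) := by
    filter_upwards [Ioi_mem_nhds (zero_lt_one)] with t ht
    have ht0 : (0:ℝ) < t := ht
    have hzt : 0 < z * t⁻¹ := by positivity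
    have h := cy_homog0 hC ht0 hy hzt
    have e : t * (z * t⁻¹) = z := by field_simp
    rw [e] at h
    rw [← h, mul_comm]
  have hA' : HasDerivAt (fun t => cy y (z * t⁻¹)) (cyy y z * y) 1 :=
    hA.congr_of_eventuallyEq heq
  have h4 : cyy y z * y = cyz y z * (-z) := hA'.unique hB
  have hcyy := hC.cyy_neg hy hz
  nlinarith [h4]

end aux

section aux2
variable {c cy cz cyy cyz czz : ℝ → ℝ → ℝ} (hC : AssumptionC c cy cz cyy cyz czz)
include hC

lemma F_hasDerivAt {z : ℝ} (hz : 0 < z) :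
    HasDerivAt (fun z => cy 1 z / cz 1 z)
      ((cyz 1 z * cz 1 z - cy 1 z * czz 1 z) / (cz 1 z) ^ 2) z :=
  (hC.hderiv_yz one_pos hz).div (hC.hderiv_zz one_pos hz) (ne_of_gt (hC.cz_pos one_pos hz))

lemma F_strictMono : StrictMonoOn (fun z => cy 1 z / cz 1 z) (Ioi 0) := by
  apply strictMonoOn_of_deriv_pos (convex_Ioi 0)
  · exact fun x hx => ((F_hasDerivAt hC hx).continuousAt).continuousWithinAt
  · intro x hx
    rw [interior_Ioi] at hx
    rw [(F_hasDerivAt hC hx).deriv]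
    have h1 := cyz_pos hC one_pos hx
    have h2 := hC.cz_pos one_pos hx
    have h3 := hC.cy_pos one_pos hx
    have h4 := hC.czz_neg one_pos hx
    have : (0:ℝ) < cyz 1 x * cz 1 x - cy 1 x * czz 1 x := by nlinarith
    positivity

lemma cy1_mono : StrictMonoOn (fun z => cy 1 z) (Ioi 0) := by
  apply strictMonoOn_of_deriv_pos (convex_Ioi 0)
  · exact fun x hx => ((hC.hderiv_yz one_pos hx).continuousAt).continuousWithinAt
  · intro x hx
    rw [interior_Ioi] at hx
    rw [(hC.hderiv_yz one_pos hx).deriv]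
    exact cyz_pos hC one_pos hx

lemma cz1_mono : StrictMonoOn (fun y => cz y 1) (Ioi 0) := by
  apply strictMonoOn_of_deriv_pos (convex_Ioi 0)
  · exact fun x hx => ((hC.hderiv_zy hx one_pos).continuousAt).continuousWithinAt
  · intro x hx
    rw [interior_Ioi] at hx
    rw [(hC.hderiv_zy hx one_pos).deriv]
    exact cyz_pos hC hx one_pos

lemma cy1_eq {z : ℝ} (hz : 0 < z) : cy 1 z = cy z⁻¹ 1 := by
  have := cy_homog0 hC hz (inv_pos.mpr hz) one_pos
  rw [mul_inv_cancel₀ (ne_of_gt hz), mul_one] at this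
  exact this

lemma cz1_eq {z : ℝ} (hz : 0 < z) : cz 1 z = cz z⁻¹ 1 := by
  have := cz_homog0 hC hz (inv_pos.mpr hz) one_pos
  rw [mul_inv_cancel₀ (ne_of_gt hz), mul_one] at this
  exact this

lemma exists_lo : ∃ z1 : ℝ, 0 < z1 ∧ z1 < 1 ∧ cy 1 z1 / cz 1 z1 < 1 := by
  have h := hC.inada_z (y := 1) one_pos
  have h2 : ∀ᶠ z in 𝓝[>] (0:ℝ), cy 1 1 < cz 1 z := h.eventually_gt_atTop _
  have h3 : ∀ᶠ z in 𝓝[>] (0:ℝ), z < 1 :=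
    eventually_nhdsWithin_of_eventually_nhds (Filter.Tendsto.eventually_lt_const zero_lt_one
      Filter.tendsto_id)
  have h4 : ∀ᶠ z in 𝓝[>] (0:ℝ), (0:ℝ) < z := eventually_mem_nhdsWithin
  obtain ⟨z1, hz2, hz3, hz4⟩ := (h2.and (h3.and h4)).exists
  -- hz3 : z1 < 1, hz4 : 0 < z1
  refine ⟨z1, hz4, hz3, ?_⟩
  have hle : cy 1 z1 ≤ cy 1 1 := le_of_lt (cy1_mono hC hz4 (mem_Ioi.mpr one_pos) hz3)
  have hczpos : 0 < cz 1 z1 := hC.cz_pos one_pos hz4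
  rw [div_lt_one hczpos]
  linarith

lemma exists_hi (M : ℝ) : ∃ z2 : ℝ, 1 < z2 ∧ M < cy 1 z2 / cz 1 z2 := by
  have hcz11 : 0 < cz 1 1 := hC.cz_pos one_pos one_pos
  have h : Tendsto (fun z : ℝ => cy z⁻¹ 1) atTop atTop :=
    (hC.inada_y one_pos).comp tendsto_inv_atTop_nhdsGT_zero
  have h2 : ∀ᶠ z in atTop, (max M 0 + 1) * cz 1 1 < cy z⁻¹ 1 := h.eventually_gt_atTop _
  have h3 : ∀ᶠ z : ℝ in atTop, 1 < z := eventually_gt_atTop 1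
  obtain ⟨z2, hz2a, hz2b⟩ := (h2.and h3).exists
  have hz2pos : 0 < z2 := lt_trans one_pos hz2b
  refine ⟨z2, hz2b, ?_⟩
  have hcyeq := cy1_eq hC hz2pos
  have hczeq := cz1_eq hC hz2pos
  have hinv : z2⁻¹ < 1 := inv_lt_one_of_one_lt₀ hz2b
  have hinvpos : 0 < z2⁻¹ := inv_pos.mpr hz2pos
  have hczle : cz 1 z2 ≤ cz 1 1 := by
    rw [hczeq]
    exact le_of_lt (cz1_mono hC hinvpos (mem_Ioi.mpr one_pos) hinv)
  have hczpos : 0 < cz 1 z2 := hC.cz_pos one_pos hz2pos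
  have hcy : (max M 0 + 1) * cz 1 1 < cy 1 z2 := by rw [hcyeq]; exact hz2a
  have step : (max M 0 + 1) ≤ cy 1 z2 / cz 1 z2 := by
    rw [le_div_iff₀ hczpos]
    nlinarith [le_max_right M 0, mul_le_mul_of_nonneg_left hczle (by positivity : (0:ℝ) ≤ max M 0 + 1)]
  have : M ≤ max M 0 := le_max_left M 0
  linarith

lemma exists_root {T : ℝ} (hT : 1 < T) : ∃ z : ℝ, 0 < z ∧ cy 1 z / cz 1 z = T := by
  obtain ⟨z1, hz1pos, hz1lt, hF1⟩ := exists_lo hC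
  obtain ⟨z2, hz2gt, hF2⟩ := exists_hi hC T
  have hz12 : z1 ≤ z2 := by linarith
  have hcont : ContinuousOn (fun z => cy 1 z / cz 1 z) (Icc z1 z2) := by
    intro x hx
    have hxpos : 0 < x := lt_of_lt_of_le hz1pos hx.1
    exact ((F_hasDerivAt hC hxpos).continuousAt).continuousWithinAt
  have hIVT := intermediate_value_Icc hz12 hcont
  have hmem : T ∈ Icc (cy 1 z1 / cz 1 z1) (cy 1 z2 / cz 1 z2) :=
    ⟨by linarith, le_of_lt hF2⟩
  obtain ⟨z, hzmem, hzval⟩ := hIVT hmem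
  exact ⟨z, lt_of_lt_of_le hz1pos hzmem.1, hzval⟩

end aux2

/-- (a) There is a unique `w_b^* > 0` with `c_y(1,G·w_b^*)/c_z(1,G·w_b^*) = G`;
(b) `w_f^* < w_b^*`; (c) `s ∈ (0,1)` satisfies the bubbly steady state condition
`G·c_z(1−s, G(w+s)) = c_y(1−s, G(w+s))` iff `s = (w_b^* − w)/(w_b^* + 1)`, and such
an `s` exists iff `w < w_b^*`. -/
theorem stmt_11 (c cy cz cyy cyz czz : ℝ → ℝ → ℝ)
    (hC : AssumptionC c cy cz cyy cyz czz) (G γ : ℝ)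
    (hG : 1 < G) (hγ0 : 0 < γ) (hγ1 : γ < 1) :
    (∃! w : ℝ, 0 < w ∧ cy 1 (G * w) / cz 1 (G * w) = G) ∧
    (∀ wf wb : ℝ, 0 < wf → cy 1 (G * wf) / cz 1 (G * wf) = G ^ γ →
      0 < wb → cy 1 (G * wb) / cz 1 (G * wb) = G →
      wf < wb ∧
      ∀ w : ℝ, 0 < w →
        (∀ s ∈ Ioo (0:ℝ) 1,
          (G * cz (1 - s) (G * (w + s)) = cy (1 - s) (G * (w + s)) ↔
            s = (wb - w) / (wb + 1))) ∧
        ((∃ s ∈ Ioo (0:ℝ) 1,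
            G * cz (1 - s) (G * (w + s)) = cy (1 - s) (G * (w + s))) ↔ w < wb)) := by
  have hG0 : (0:ℝ) < G := lt_trans one_pos hG
  have hFm := F_strictMono hC
  constructor
  · -- (a)
    obtain ⟨zb, hzbpos, hzbval⟩ := exists_root hC hG
    refine ⟨zb / G, ⟨div_pos hzbpos hG0, ?_⟩, ?_⟩
    · rw [mul_div_cancel₀ _ (ne_of_gt hG0)]; exact hzbval
    · rintro y ⟨hy, hyval⟩
      have h1 : G * y ∈ Ioi (0:ℝ) := mem_Ioi.mpr (by positivity)
      have h2 : zb ∈ Ioi (0:ℝ) := hzbpos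
      have := hFm.injOn h1 h2 (by rw [hyval, hzbval])
      field_simp
      linarith [this]
  · -- (b) and (c)
    intro wf wb hwf hfval hwb hbval
    have hGwf : G * wf ∈ Ioi (0:ℝ) := mem_Ioi.mpr (by positivity)
    have hGwb : G * wb ∈ Ioi (0:ℝ) := mem_Ioi.mpr (by positivity)
    have hγG : G ^ γ < G := by
      nth_rewrite 2 [show G = G ^ (1:ℝ) by rw [Real.rpow_one]]
      exact Real.rpow_lt_rpow_of_exponent_lt hG hγ1
    have hwfwb : wf < wb := by
      have h := (hFm.lt_iff_lt hGwf hGwb).mp (by rw [hfval, hbval]; exact hγG)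
      exact lt_of_mul_lt_mul_left h (le_of_lt hG0)
    refine ⟨hwfwb, ?_⟩
    intro w hw
    have hwb1 : (0:ℝ) < wb + 1 := by linarith
    have key : ∀ s ∈ Ioo (0:ℝ) 1,
        (G * cz (1 - s) (G * (w + s)) = cy (1 - s) (G * (w + s)) ↔
          s = (wb - w) / (wb + 1)) := by
      intro s hs
      obtain ⟨hs0, hs1⟩ := hs
      have h1s : 0 < 1 - s := by linarith
      have hws : 0 < w + s := by linarith
      set u := (w + s) / (1 - s) with hu_def
      have hu : 0 < u := div_pos hws h1s
      have hGu : 0 < G * u := by positivity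
      have hscale : (1 - s) * (G * u) = G * (w + s) := by
        rw [hu_def]; field_simp [ne_of_gt h1s]
      have hcyeq : cy (1 - s) (G * (w + s)) = cy 1 (G * u) := by
        rw [← hscale, ← cy_homog0 hC h1s one_pos hGu, mul_one]
      have hczeq : cz (1 - s) (G * (w + s)) = cz 1 (G * u) := by
        rw [← hscale, ← cz_homog0 hC h1s one_pos hGu, mul_one]
      rw [hcyeq, hczeq]
      have hczpos : 0 < cz 1 (G * u) := hC.cz_pos one_pos hGu
      have hczbpos : 0 < cz 1 (G * wb) := hC.cz_pos one_pos (by positivity)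
      have step1 : G * cz 1 (G * u) = cy 1 (G * u) ↔ u = wb := by
        constructor
        · intro h
          have hFu : cy 1 (G * u) / cz 1 (G * u) = G := by
            rw [← h]; field_simp
          have := hFm.injOn (mem_Ioi.mpr hGu) hGwb (by rw [hFu, hbval])
          exact mul_left_cancel₀ (ne_of_gt hG0) this
        · intro h
          subst h
          rw [div_eq_iff (ne_of_gt hczbpos)] at hbval
          linarith [hbval]
      rw [step1]
      rw [hu_def, div_eq_iff (ne_of_gt h1s), eq_div_iff (ne_of_gt hwb1)]
      constructor <;> intro h <;> nlinarith [h]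
    refine ⟨key, ?_, ?_⟩
    · rintro ⟨s, hs, hcond⟩
      have h := (key s hs).mp hcond
      have hspos := hs.1
      rw [h] at hspos
      have := (div_pos_iff.mp hspos)
      rcases this with ⟨h1, _⟩ | ⟨_, h2⟩
      · linarith
      · linarith
    · intro hwlt
      refine ⟨(wb - w) / (wb + 1), ⟨div_pos (by linarith) hwb1, ?_⟩, ?_⟩
      · rw [div_lt_one hwb1]; linarith
      · exact (key _ ⟨div_pos (by linarith) hwb1, by rw [div_lt_one hwb1]; linarith⟩).mpr rfl
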